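/- For every positive natural number n, the sum over l from 1 to n-1 of l·sin(lπ/(2n)), plus n/2, equals 1/(4·sin²(π/(4n))). -/

import Mathlib

open Finset Real

/-- The Perron–Frobenius eigenvalue of Bürgi's matrix:
`∑_{l=1}^{n-1} l·sin(lπ/(2n)) + n/2 = csc²(π/(4n))/4`. -/
theorem buergi_eigenvalue (n : ℕ) (hn : 0 < n) :
    (∑ l ∈ Finset.Icc 1 (n - 1), (l : ℝ) * Real.sin ((l : ℝ) * Real.pi / (2 * n)))
      + (n : ℝ) / 2
    = 1 / (4 * (Real.sin (Real.pi / (4 * n))) ^ 2) := by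
  have hn0 : (n : ℝ) ≠ 0 := Nat.cast_ne_zero.mpr hn.ne'
  have hn1 : (1 : ℝ) ≤ (n : ℝ) := Nat.one_le_cast.mpr hn
  set θ : ℝ := Real.pi / (2 * n) with hθ
  set x : ℝ := Real.pi / (4 * n) with hx
  have hθ2x : θ = 2 * x := by rw [hθ, hx]; field_simp; ring
  have hxpos : 0 < x := by rw [hx]; positivity
  have hxlt : x < Real.pi := by
    rw [hx]
    have h1 : Real.pi / (4 * (n:ℝ)) ≤ Real.pi / 4 :=
      div_le_div_of_nonneg_left pi_pos.le (by norm_num) (by linarith)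
    linarith [pi_pos]
  have hsx : Real.sin x ≠ 0 := ne_of_gt (Real.sin_pos_of_pos_of_lt_pi hxpos hxlt)
  have hc : Real.cos θ = 1 - 2 * Real.sin x ^ 2 := by
    rw [hθ2x, Real.cos_two_mul]
    nlinarith [Real.sin_sq_add_cos_sq x]
  -- the telescoping function
  set g : ℕ → ℝ := fun l => (l : ℝ) * Real.sin (((l : ℝ) - 1) * θ)
      - ((l : ℝ) - 1) * Real.sin ((l : ℝ) * θ) with hg
  have hstep : ∀ l : ℕ,
      (2 - 2 * Real.cos θ) * ((l : ℝ) * Real.sin ((l : ℝ) * θ)) = g (l + 1) - g l := by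
    intro l
    simp only [hg]
    push_cast
    rw [show ((l : ℝ) + 1 - 1) * θ = (l : ℝ) * θ by ring]
    rw [show ((l : ℝ) + 1) * θ = (l : ℝ) * θ + θ by ring, Real.sin_add]
    rw [show ((l : ℝ) - 1) * θ = (l : ℝ) * θ - θ by ring, Real.sin_sub]
    ring
  have htel : ∑ l ∈ Finset.range n,
      ((2 - 2 * Real.cos θ) * ((l : ℝ) * Real.sin ((l : ℝ) * θ))) = g n - g 0 := by
    simp_rw [hstep]
    exact Finset.sum_range_sub g n
  have hg0 : g 0 = 0 := by simp [hg]
  have hsnθ : Real.sin ((n : ℝ) * θ) = 1 := by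
    rw [show (n : ℝ) * θ = Real.pi / 2 by rw [hθ]; field_simp, Real.sin_pi_div_two]
  have hsn1θ : Real.sin (((n : ℝ) - 1) * θ) = Real.cos θ := by
    rw [show ((n : ℝ) - 1) * θ = Real.pi / 2 - θ by rw [hθ]; field_simp,
      Real.sin_pi_div_two_sub]
  have hgn : g n = (n : ℝ) * Real.cos θ - ((n : ℝ) - 1) := by
    simp only [hg, hsnθ, hsn1θ]; ring
  -- convert the Icc sum to a range sum
  have hIcc : ∑ l ∈ Finset.Icc 1 (n - 1), ((l : ℝ) * Real.sin ((l : ℝ) * θ))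
      = ∑ l ∈ Finset.range n, ((l : ℝ) * Real.sin ((l : ℝ) * θ)) := by
    rw [Finset.range_eq_Ico, Finset.sum_eq_sum_Ico_succ_bot hn]
    rw [← Finset.Ico_add_one_right_eq_Icc, show n - 1 + 1 = n by omega]
    simp
  have hfin : (2 - 2 * Real.cos θ) *
      (∑ l ∈ Finset.Icc 1 (n - 1), ((l : ℝ) * Real.sin ((l : ℝ) * θ)))
      = (n : ℝ) * Real.cos θ - ((n : ℝ) - 1) := by
    rw [hIcc, Finset.mul_sum, htel, hg0, hgn]; ring
  -- rewrite the summand of the goal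
  have hsummand : ∀ l : ℕ, (l : ℝ) * Real.sin ((l : ℝ) * Real.pi / (2 * n))
      = (l : ℝ) * Real.sin ((l : ℝ) * θ) := by
    intro l; rw [hθ, mul_div_assoc]
  simp_rw [hsummand]
  rw [eq_div_iff (by positivity : (4 * Real.sin x ^ 2 : ℝ) ≠ 0)]
  have h4 : 4 * Real.sin x ^ 2 = 2 - 2 * Real.cos θ := by rw [hc]; ring
  rw [h4]
  linear_combination hfin
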